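/- Let $\mu,\nu$ be Borel probability measures on a complete separable metric space $(X,d)$, $x_0\in X$, and suppose the moments $\Theta_{2p}(\mu)=\int d(x_0,x)^{2p}d\mu$ and $\Theta_{2p}(\nu)$ are finite, $0<p\leq 1/2$. Let $\mathscr{B}\subset X$ be open with $\mu(\mathscr{B}),\nu(\mathscr{B})\leq 1/4$, and let $\psi:X\to\mathbb{R}$ be measurable and $p$-H\"older with constant $L\geq 1$ on $X\setminus\mathscr{B}$. Then $\left|\int\psi\,d\mu-\int\psi\,d\nu\right| \leq L\left[W_p(\mu,\nu)+4\sqrt{\mu(\mathscr{B})}(\|\psi\|_{L^2(\mu)}+\Theta_{2p}(\mu)^{1/2})+4\sqrt{\nu(\mathscr{B})}(\|\psi\|_{L^2(\nu)}+\Theta_{2p}(\nu)^{1/2})\right]$. -/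

import Mathlib

set_option linter.unusedSectionVars false
set_option maxHeartbeats 1000000
open MeasureTheory ENNReal

section helpers
variable {X : Type*} [MeasurableSpace X]

lemma rpow_add_le' {p a b : ℝ} (hp0 : 0 < p) (hp1 : p ≤ 1) (ha : 0 ≤ a) (hb : 0 ≤ b) :
    (a + b) ^ p ≤ a ^ p + b ^ p := by
  have h := NNReal.rpow_add_le_add_rpow a.toNNReal b.toNNReal hp0.le hp1
  rw [← Real.toNNReal_add ha hb] at h
  have := NNReal.coe_le_coe.mpr h
  rwa [NNReal.coe_add, NNReal.coe_rpow, NNReal.coe_rpow, NNReal.coe_rpow,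
    Real.coe_toNNReal _ (by positivity), Real.coe_toNNReal _ ha, Real.coe_toNNReal _ hb] at this

lemma dist_rpow_le3 {p : ℝ} (hp0 : 0 < p) (hp1 : p ≤ 1) {X : Type*} [MetricSpace X]
    (u x y v : X) : dist u v ^ p ≤ dist u x ^ p + dist x y ^ p + dist y v ^ p := by
  have h1 : dist u v ≤ dist u x + (dist x y + dist y v) := by
    calc dist u v ≤ dist u x + dist x v := dist_triangle _ _ _
    _ ≤ dist u x + (dist x y + dist y v) := by
        have := dist_triangle x y v; linarith
  calc dist u v ^ p ≤ (dist u x + (dist x y + dist y v)) ^ p :=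
        Real.rpow_le_rpow dist_nonneg h1 hp0.le
    _ ≤ dist u x ^ p + (dist x y + dist y v) ^ p :=
        rpow_add_le' hp0 hp1 dist_nonneg (by positivity)
    _ ≤ dist u x ^ p + (dist x y ^ p + dist y v ^ p) := by
        have := rpow_add_le' hp0 hp1 (dist_nonneg (x := x) (y := y)) (dist_nonneg (x := y) (y := v))
        linarith
    _ = _ := by ring

/-- Cauchy–Schwarz for lintegral on a probability measure. -/
lemma lintegral_le_sqrt_sq (μ : Measure X) [IsProbabilityMeasure μ] {f : X → ℝ≥0∞}
    (hf : AEMeasurable f μ) :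
    ∫⁻ x, f x ∂μ ≤ (∫⁻ x, f x ^ (2:ℝ) ∂μ) ^ (1/2 : ℝ) := by
  have hconj : Real.HolderConjugate 2 2 := Real.HolderConjugate.two_two
  have h := ENNReal.lintegral_mul_le_Lp_mul_Lq μ hconj hf aemeasurable_const (g := fun _ => 1)
  simpa using h

lemma lintegral_set_le_sqrt_sq (μ : Measure X) {f : X → ℝ≥0∞}
    (hf : AEMeasurable f μ) {s : Set X} (hs : MeasurableSet s) :
    ∫⁻ x in s, f x ∂μ ≤ (∫⁻ x, f x ^ (2:ℝ) ∂μ) ^ (1/2 : ℝ) * (μ s) ^ (1/2 : ℝ) := by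
  have hconj : Real.HolderConjugate 2 2 := Real.HolderConjugate.two_two
  have hg : AEMeasurable (s.indicator (fun _ => (1:ℝ≥0∞))) μ :=
    (measurable_one.indicator hs).aemeasurable
  have h := ENNReal.lintegral_mul_le_Lp_mul_Lq μ hconj hf hg
  have h1 : ∫⁻ a, (f * s.indicator (fun _ => (1:ℝ≥0∞))) a ∂μ = ∫⁻ x in s, f x ∂μ := by
    rw [← lintegral_indicator hs]
    congr 1; ext x
    by_cases hx : x ∈ s <;> simp [hx, Set.indicator_of_mem, Set.indicator_of_notMem]
  have h2 : ∫⁻ a, (s.indicator (fun _ => (1:ℝ≥0∞)) a) ^ (2:ℝ) ∂μ = μ s := by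
    rw [← lintegral_indicator_one hs]
    congr 1; ext x
    by_cases hx : x ∈ s <;> simp [hx, ENNReal.zero_rpow_of_pos]
  rw [h1, h2] at h
  simpa using h

end helpers


section numeric
variable {m : ℝ≥0∞}

lemma quarter_lt_top : (1/4 : ℝ≥0∞) < ⊤ := by norm_num

lemma hm_ne_top (hm : m ≤ 1/4) : m ≠ ⊤ := (lt_of_le_of_lt hm quarter_lt_top).ne

lemma h34_le (hm : m ≤ 1/4) : (3/4 : ℝ≥0∞) ≤ 1 - m := by
  have : (1:ℝ≥0∞) - 1/4 = 3/4 := ENNReal.sub_eq_of_eq_add (by norm_num)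
    (by rw [ENNReal.div_add_div_same, show (3:ℝ≥0∞)+1 = 4 by norm_num,
          ENNReal.div_self (by norm_num) (by norm_num)])
  rw [← this]
  exact tsub_le_tsub_left hm 1

lemma h1m_ne_zero (hm : m ≤ 1/4) : (1:ℝ≥0∞) - m ≠ 0 := by
  intro h
  have := h34_le hm
  rw [h] at this
  exact absurd this (by norm_num)

lemma hinv_ne_top (hm : m ≤ 1/4) : ((1:ℝ≥0∞) - m)⁻¹ ≠ ⊤ :=
  ENNReal.inv_ne_top.mpr (h1m_ne_zero hm)

lemma hm_ofReal (hm : m ≤ 1/4) : m = ENNReal.ofReal m.toReal :=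
  (ENNReal.ofReal_toReal (hm_ne_top hm)).symm

lemma ht_mem (hm : m ≤ 1/4) : 0 ≤ m.toReal ∧ m.toReal ≤ 1/4 := by
  constructor
  · exact ENNReal.toReal_nonneg
  · rw [show (1/4 : ℝ) = (1/4 : ℝ≥0∞).toReal by norm_num]
    exact ENNReal.toReal_mono (by norm_num) hm

lemma h1m_eq (hm : m ≤ 1/4) : (1:ℝ≥0∞) - m = ENNReal.ofReal (1 - m.toReal) := by
  rw [ENNReal.ofReal_sub _ ENNReal.toReal_nonneg, ENNReal.ofReal_one, ← hm_ofReal hm]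

lemma real_ratio {t : ℝ} (ht0 : 0 ≤ t) (ht1 : t ≤ 1/4) : t * (1 - t)⁻¹ ≤ t ^ (1/2 : ℝ) := by
  have hs : t ^ (1/2:ℝ) = Real.sqrt t := (Real.sqrt_eq_rpow t).symm
  rw [hs]
  set s := Real.sqrt t with hsdef
  have hs0 : 0 ≤ s := Real.sqrt_nonneg t
  have hs2 : s ^ 2 = t := Real.sq_sqrt ht0
  have hs12 : s ≤ 1/2 := by
    rw [hsdef, show (1/2:ℝ) = Real.sqrt (1/4) by
      rw [show (1/4:ℝ) = (1/2)^2 by norm_num, Real.sqrt_sq (by norm_num)]]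
    exact Real.sqrt_le_sqrt ht1
  have h1t : (3/4 : ℝ) ≤ 1 - t := by linarith
  rw [mul_inv_le_iff₀' (by linarith)]
  nlinarith

lemma hratio (hm : m ≤ 1/4) : m * ((1:ℝ≥0∞) - m)⁻¹ ≤ m ^ (1/2 : ℝ) := by
  obtain ⟨ht0, ht1⟩ := ht_mem hm
  have h1t : (0:ℝ) < 1 - m.toReal := by linarith
  rw [h1m_eq hm, ← ENNReal.ofReal_inv_of_pos h1t]
  nth_rewrite 1 [hm_ofReal hm]
  nth_rewrite 3 [hm_ofReal hm]
  rw [← ENNReal.ofReal_mul ht0, ENNReal.ofReal_rpow_of_nonneg ht0 (by norm_num)]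
  exact ENNReal.ofReal_le_ofReal (real_ratio ht0 ht1)

lemma hsub_le (hm : m ≤ 1/4) : ((1:ℝ≥0∞) - m)⁻¹ - 1 ≤ m ^ (1/2 : ℝ) := by
  obtain ⟨ht0, ht1⟩ := ht_mem hm
  have h1t : (0:ℝ) < 1 - m.toReal := by linarith
  rw [h1m_eq hm, ← ENNReal.ofReal_inv_of_pos h1t, ← ENNReal.ofReal_one,
    ← ENNReal.ofReal_sub _ (by norm_num)]
  nth_rewrite 2 [hm_ofReal hm]
  rw [ENNReal.ofReal_rpow_of_nonneg ht0 (by norm_num)]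
  apply ENNReal.ofReal_le_ofReal
  have := real_ratio ht0 ht1
  have hinv : (1 - m.toReal)⁻¹ - 1 = m.toReal * (1 - m.toReal)⁻¹ := by
    field_simp
    ring
  linarith [hinv ▸ this]

lemma htoReal_inv_ge1 (hm : m ≤ 1/4) : 1 ≤ (((1:ℝ≥0∞) - m)⁻¹).toReal := by
  obtain ⟨ht0, ht1⟩ := ht_mem hm
  have h1t : (0:ℝ) < 1 - m.toReal := by linarith
  rw [ENNReal.toReal_inv, h1m_eq hm, ENNReal.toReal_ofReal h1t.le]
  have hmul : (1 - m.toReal) * (1 - m.toReal)⁻¹ = 1 := mul_inv_cancel₀ h1t.ne'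
  nlinarith [inv_nonneg.mpr h1t.le]

end numeric

section measures
variable {X : Type*} [MetricSpace X] [MeasurableSpace X] [BorelSpace X]

/-- normalized restriction to the complement of `𝓑`. -/
noncomputable def nbar (𝓑 : Set X) (lam : Measure X) : Measure X :=
  ((1 : ℝ≥0∞) - lam 𝓑)⁻¹ • lam.restrict 𝓑ᶜ

variable {𝓑 : Set X} {lam : Measure X}

lemma nbar_prob [IsProbabilityMeasure lam] (h𝓑 : MeasurableSet 𝓑) (hm : lam 𝓑 ≤ 1/4) :
    IsProbabilityMeasure (nbar 𝓑 lam) := by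
  constructor
  rw [nbar, Measure.smul_apply, smul_eq_mul, Measure.restrict_apply MeasurableSet.univ,
    Set.univ_inter, measure_compl h𝓑 (measure_ne_top _ _), measure_univ]
  exact ENNReal.inv_mul_cancel (h1m_ne_zero hm) (by
    exact ne_top_of_le_ne_top (by norm_num) (tsub_le_self.trans le_rfl))

lemma nbar_null (h𝓑 : MeasurableSet 𝓑) : nbar 𝓑 lam 𝓑 = 0 := by
  rw [nbar, Measure.smul_apply, Measure.restrict_apply h𝓑]
  simp

lemma nbar_ae (h𝓑 : MeasurableSet 𝓑) : ∀ᵐ x ∂(nbar 𝓑 lam), x ∉ 𝓑 :=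
  measure_eq_zero_iff_ae_notMem.mp (nbar_null h𝓑)

lemma nbar_integrable (hm : lam 𝓑 ≤ 1/4) {f : X → ℝ} (hf : Integrable f lam) :
    Integrable f (nbar 𝓑 lam) :=
  (hf.restrict).smul_measure (hinv_ne_top hm)

lemma nbar_lintegral (f : X → ℝ≥0∞) :
    ∫⁻ x, f x ∂(nbar 𝓑 lam) = ((1 : ℝ≥0∞) - lam 𝓑)⁻¹ * ∫⁻ x in 𝓑ᶜ, f x ∂lam := by
  rw [nbar, lintegral_smul_measure, smul_eq_mul]

lemma mom_mem2 {p : ℝ} (hp0 : 0 < p) (x₀ : X) [IsProbabilityMeasure lam]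
    (hmom : ∫⁻ x, (ENNReal.ofReal (dist x₀ x)) ^ (2 * p) ∂lam ≠ ⊤) :
    MemLp (fun x => dist x₀ x ^ p) 2 lam := by
  refine ⟨((continuous_const.dist continuous_id).rpow_const
    (fun x => Or.inr hp0.le)).aestronglyMeasurable, ?_⟩
  rw [eLpNorm_eq_lintegral_rpow_enorm_toReal (by norm_num) (by norm_num)]
  simp_rw [enorm_eq_nnnorm]
  have hcalc : ∀ x : X, ((‖dist x₀ x ^ p‖₊ : ℝ≥0∞)) ^ ((2:ℝ≥0∞).toReal)
      = (ENNReal.ofReal (dist x₀ x)) ^ (2 * p) := by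
    intro x
    rw [← enorm_eq_nnnorm, Real.enorm_eq_ofReal_abs, abs_of_nonneg (Real.rpow_nonneg dist_nonneg p),
      ← ENNReal.ofReal_rpow_of_nonneg dist_nonneg hp0.le, ENNReal.toReal_ofNat,
      ← ENNReal.rpow_mul, mul_comm p 2]
  simp_rw [hcalc]
  refine ENNReal.rpow_lt_top_of_nonneg (by norm_num) hmom

end measures

section term1
variable {X : Type*} [MetricSpace X] [MeasurableSpace X] [BorelSpace X]
variable {𝓑 : Set X} {lam : Measure X}

lemma eLpNorm_two_eq (ψ : X → ℝ) :
    eLpNorm ψ 2 lam = (∫⁻ x, ((‖ψ x‖₊ : ℝ≥0∞)) ^ (2:ℝ) ∂lam) ^ (1/2:ℝ) := by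
  rw [eLpNorm_eq_lintegral_rpow_enorm_toReal (by norm_num) (by norm_num)]
  norm_num
  rfl

lemma norm_lintegral_le_eLpNorm [IsProbabilityMeasure lam] {ψ : X → ℝ} (hψ : Measurable ψ) :
    ∫⁻ x, (‖ψ x‖₊ : ℝ≥0∞) ∂lam ≤ eLpNorm ψ 2 lam := by
  rw [eLpNorm_two_eq]
  exact lintegral_le_sqrt_sq lam (hψ.nnnorm.coe_nnreal_ennreal).aemeasurable

lemma term1 [IsProbabilityMeasure lam] (h𝓑 : MeasurableSet 𝓑) (hm : lam 𝓑 ≤ 1/4)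
    {ψ : X → ℝ} (hψmeas : Measurable ψ) (hψ : MemLp ψ 2 lam) :
    ENNReal.ofReal |(∫ x, ψ x ∂lam) - ∫ x, ψ x ∂(nbar 𝓑 lam)|
      ≤ 2 * (lam 𝓑) ^ (1/2:ℝ) * eLpNorm ψ 2 lam := by
  set m := lam 𝓑 with hmdef
  set r := (((1:ℝ≥0∞) - m)⁻¹).toReal with hrdef
  have hr1 : 1 ≤ r := htoReal_inv_ge1 hm
  have hint : Integrable ψ lam := hψ.integrable (by norm_num)
  have hbar : ∫ x, ψ x ∂(nbar 𝓑 lam) = r * ∫ x in 𝓑ᶜ, ψ x ∂lam := by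
    rw [nbar, integral_smul_measure, smul_eq_mul]
  have hsplit : ∫ x, ψ x ∂lam = (∫ x in 𝓑, ψ x ∂lam) + ∫ x in 𝓑ᶜ, ψ x ∂lam :=
    (integral_add_compl h𝓑 hint).symm
  have habs : |(∫ x, ψ x ∂lam) - ∫ x, ψ x ∂(nbar 𝓑 lam)|
      ≤ |∫ x in 𝓑, ψ x ∂lam| + (r - 1) * |∫ x in 𝓑ᶜ, ψ x ∂lam| := by
    rw [hbar, hsplit]
    have : (∫ x in 𝓑, ψ x ∂lam) + (∫ x in 𝓑ᶜ, ψ x ∂lam) - r * ∫ x in 𝓑ᶜ, ψ x ∂lam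
        = (∫ x in 𝓑, ψ x ∂lam) + (1 - r) * ∫ x in 𝓑ᶜ, ψ x ∂lam := by ring
    rw [this]
    have h1r : |1 - r| = r - 1 := by
      rw [abs_of_nonpos (by linarith : (1:ℝ) - r ≤ 0)]; ring
    calc _ ≤ |∫ x in 𝓑, ψ x ∂lam| + |(1 - r) * ∫ x in 𝓑ᶜ, ψ x ∂lam| := abs_add_le _ _
    _ = |∫ x in 𝓑, ψ x ∂lam| + (r - 1) * |∫ x in 𝓑ᶜ, ψ x ∂lam| := by
        rw [abs_mul, h1r]
  have hA : ENNReal.ofReal |∫ x in 𝓑, ψ x ∂lam| ≤ eLpNorm ψ 2 lam * m ^ (1/2:ℝ) := by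
    calc ENNReal.ofReal |∫ x in 𝓑, ψ x ∂lam|
        ≤ ENNReal.ofReal (∫ x in 𝓑, |ψ x| ∂lam) :=
          ENNReal.ofReal_le_ofReal (by rw [← Real.norm_eq_abs]; exact (norm_integral_le_integral_norm _).trans (le_of_eq (by simp [Real.norm_eq_abs])))
      _ = ∫⁻ x in 𝓑, ENNReal.ofReal |ψ x| ∂lam :=
          ofReal_integral_eq_lintegral_ofReal hint.abs.restrict
            (Filter.Eventually.of_forall fun x => abs_nonneg _)
      _ = ∫⁻ x in 𝓑, (‖ψ x‖₊ : ℝ≥0∞) ∂lam := by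
          refine lintegral_congr fun x => (Real.enorm_eq_ofReal_abs _).symm
      _ ≤ (∫⁻ x, ((‖ψ x‖₊ : ℝ≥0∞)) ^ (2:ℝ) ∂lam) ^ (1/2:ℝ) * m ^ (1/2:ℝ) :=
          lintegral_set_le_sqrt_sq lam (hψmeas.nnnorm.coe_nnreal_ennreal).aemeasurable h𝓑
      _ = eLpNorm ψ 2 lam * m ^ (1/2:ℝ) := by rw [eLpNorm_two_eq]
  have hone_le_inv : (1:ℝ≥0∞) ≤ ((1:ℝ≥0∞) - m)⁻¹ := by
    rw [ENNReal.one_le_inv]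
    exact tsub_le_self
  have hofr : ENNReal.ofReal (r - 1) = ((1:ℝ≥0∞) - m)⁻¹ - 1 := by
    rw [hrdef, show (1:ℝ) = (1:ℝ≥0∞).toReal by simp,
      ← ENNReal.toReal_sub_of_le hone_le_inv (hinv_ne_top hm),
      ENNReal.ofReal_toReal]
    exact ne_top_of_le_ne_top (hinv_ne_top hm) tsub_le_self
  have hB : ENNReal.ofReal ((r - 1) * |∫ x in 𝓑ᶜ, ψ x ∂lam|)
      ≤ m ^ (1/2:ℝ) * eLpNorm ψ 2 lam := by
    rw [ENNReal.ofReal_mul (by linarith)]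
    refine mul_le_mul' (hofr ▸ hsub_le hm) ?_
    have e1 : |∫ x in 𝓑ᶜ, ψ x ∂lam| ≤ ∫ x in 𝓑ᶜ, |ψ x| ∂lam := by
      rw [← Real.norm_eq_abs]
      exact (norm_integral_le_integral_norm _).trans (le_of_eq (by simp [Real.norm_eq_abs]))
    have e2 : ∫ x in 𝓑ᶜ, |ψ x| ∂lam ≤ ∫ x, |ψ x| ∂lam :=
      setIntegral_le_integral hint.abs (Filter.Eventually.of_forall fun x => abs_nonneg _)
    have e3 : ENNReal.ofReal (∫ x, |ψ x| ∂lam) = ∫⁻ x, (‖ψ x‖₊ : ℝ≥0∞) ∂lam := by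
      rw [ofReal_integral_eq_lintegral_ofReal hint.abs
        (Filter.Eventually.of_forall fun x => abs_nonneg _)]
      exact lintegral_congr fun x => (Real.enorm_eq_ofReal_abs _).symm
    calc ENNReal.ofReal |∫ x in 𝓑ᶜ, ψ x ∂lam|
        ≤ ENNReal.ofReal (∫ x, |ψ x| ∂lam) := ENNReal.ofReal_le_ofReal (e1.trans e2)
      _ = ∫⁻ x, (‖ψ x‖₊ : ℝ≥0∞) ∂lam := e3
      _ ≤ eLpNorm ψ 2 lam := norm_lintegral_le_eLpNorm hψmeas
  calc ENNReal.ofReal |(∫ x, ψ x ∂lam) - ∫ x, ψ x ∂(nbar 𝓑 lam)|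
      ≤ ENNReal.ofReal (|∫ x in 𝓑, ψ x ∂lam| + (r - 1) * |∫ x in 𝓑ᶜ, ψ x ∂lam|) :=
        ENNReal.ofReal_le_ofReal habs
    _ ≤ ENNReal.ofReal |∫ x in 𝓑, ψ x ∂lam|
        + ENNReal.ofReal ((r - 1) * |∫ x in 𝓑ᶜ, ψ x ∂lam|) := ENNReal.ofReal_add_le
    _ ≤ eLpNorm ψ 2 lam * m ^ (1/2:ℝ) + m ^ (1/2:ℝ) * eLpNorm ψ 2 lam :=
        add_le_add hA hB
    _ = 2 * m ^ (1/2:ℝ) * eLpNorm ψ 2 lam := by ring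
end term1

section Gbound
variable {X : Type*} [MetricSpace X] [MeasurableSpace X] [BorelSpace X]
variable {𝓑 : Set X} {lam : Measure X}

lemma meas_dpow {p : ℝ} (x₀ : X) : Measurable fun x : X => (ENNReal.ofReal (dist x₀ x)) ^ p :=
  ((continuous_const.dist continuous_id).measurable).ennreal_ofReal.pow_const p

lemma dpow_tri {p : ℝ} (hp0 : 0 < p) (hp1 : p ≤ 1) (x u y : X) :
    (ENNReal.ofReal (dist u y)) ^ p
      ≤ (ENNReal.ofReal (dist u x)) ^ p + (ENNReal.ofReal (dist x y)) ^ p := by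
  calc (ENNReal.ofReal (dist u y)) ^ p
      ≤ (ENNReal.ofReal (dist u x) + ENNReal.ofReal (dist x y)) ^ p := by
        apply ENNReal.rpow_le_rpow _ hp0.le
        rw [← ENNReal.ofReal_add dist_nonneg dist_nonneg]
        exact ENNReal.ofReal_le_ofReal (dist_triangle u x y)
    _ ≤ _ := ENNReal.rpow_add_le_add_rpow _ _ hp0.le hp1

lemma cs_moment {p : ℝ} (x₀ : X) [IsProbabilityMeasure lam] :
    ∫⁻ x, (ENNReal.ofReal (dist x₀ x)) ^ p ∂lam
      ≤ (∫⁻ x, (ENNReal.ofReal (dist x₀ x)) ^ (2 * p) ∂lam) ^ (1/2:ℝ) := by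
  have h := lintegral_le_sqrt_sq lam (f := fun x => (ENNReal.ofReal (dist x₀ x)) ^ p)
    (meas_dpow x₀).aemeasurable
  refine h.trans (le_of_eq ?_)
  congr 1
  refine lintegral_congr fun x => ?_
  rw [← ENNReal.rpow_mul, mul_comm]

lemma Gbound {p : ℝ} (hp0 : 0 < p) (hp1 : p ≤ 1) (x₀ : X) [IsProbabilityMeasure lam]
    (h𝓑 : MeasurableSet 𝓑) (hm : lam 𝓑 ≤ 1/4) :
    ∫⁻ x in 𝓑, (∫⁻ u, (ENNReal.ofReal (dist u x)) ^ p ∂(nbar 𝓑 lam)) ∂lam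
      ≤ 2 * (lam 𝓑) ^ (1/2:ℝ)
        * (∫⁻ x, (ENNReal.ofReal (dist x₀ x)) ^ (2 * p) ∂lam) ^ (1/2:ℝ) := by
  haveI := nbar_prob h𝓑 hm
  set m := lam 𝓑 with hmdef
  set Θh := (∫⁻ x, (ENNReal.ofReal (dist x₀ x)) ^ (2 * p) ∂lam) ^ (1/2:ℝ) with hΘdef
  set Gc := ∫⁻ u, (ENNReal.ofReal (dist x₀ u)) ^ p ∂(nbar 𝓑 lam) with hGcdef
  have hGc : Gc ≤ ((1:ℝ≥0∞) - m)⁻¹ * Θh := by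
    rw [hGcdef, nbar_lintegral]
    exact mul_le_mul' le_rfl ((lintegral_mono' Measure.restrict_le_self le_rfl).trans
      (cs_moment x₀))
  have hptwise : ∀ x : X, (∫⁻ u, (ENNReal.ofReal (dist u x)) ^ p ∂(nbar 𝓑 lam))
      ≤ Gc + (ENNReal.ofReal (dist x₀ x)) ^ p := by
    intro x
    calc ∫⁻ u, (ENNReal.ofReal (dist u x)) ^ p ∂(nbar 𝓑 lam)
        ≤ ∫⁻ u, ((ENNReal.ofReal (dist x₀ u)) ^ p + (ENNReal.ofReal (dist x₀ x)) ^ p)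
            ∂(nbar 𝓑 lam) := by
          refine lintegral_mono fun u => ?_
          have := dpow_tri hp0 hp1 x₀ u x
          rwa [dist_comm u x₀] at this
      _ = Gc + (ENNReal.ofReal (dist x₀ x)) ^ p := by
          rw [lintegral_add_right _ measurable_const, lintegral_const, measure_univ, mul_one]
  calc ∫⁻ x in 𝓑, (∫⁻ u, (ENNReal.ofReal (dist u x)) ^ p ∂(nbar 𝓑 lam)) ∂lam
      ≤ ∫⁻ x in 𝓑, (Gc + (ENNReal.ofReal (dist x₀ x)) ^ p) ∂lam :=
        lintegral_mono fun x => hptwise x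
    _ = Gc * m + ∫⁻ x in 𝓑, (ENNReal.ofReal (dist x₀ x)) ^ p ∂lam := by
        rw [lintegral_add_left measurable_const, lintegral_const,
          Measure.restrict_apply_univ]
    _ ≤ ((1:ℝ≥0∞) - m)⁻¹ * Θh * m + Θh * m ^ (1/2:ℝ) := by
        refine add_le_add (mul_le_mul' hGc le_rfl) ?_
        have h := lintegral_set_le_sqrt_sq lam (f := fun x => (ENNReal.ofReal (dist x₀ x)) ^ p)
          (meas_dpow x₀).aemeasurable h𝓑
        refine h.trans (le_of_eq ?_)
        congr 2
        refine lintegral_congr fun x => ?_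
        rw [← ENNReal.rpow_mul, mul_comm]
    _ ≤ m ^ (1/2:ℝ) * Θh + Θh * m ^ (1/2:ℝ) := by
        refine add_le_add ?_ le_rfl
        have : ((1:ℝ≥0∞) - m)⁻¹ * Θh * m = (m * ((1:ℝ≥0∞) - m)⁻¹) * Θh := by ring
        rw [this]
        exact mul_le_mul' (hratio hm) le_rfl
    _ = 2 * m ^ (1/2:ℝ) * Θh := by ring

end Gbound

section moreHelpers
variable {X : Type*} [MetricSpace X] [MeasurableSpace X] [BorelSpace X]
variable {𝓑 : Set X} {lam : Measure X}

lemma real_dist_rpow_le {p : ℝ} (hp0 : 0 < p) (hp1 : p ≤ 1) (u x y : X) :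
    dist u y ^ p ≤ dist u x ^ p + dist x y ^ p := by
  calc dist u y ^ p ≤ (dist u x + dist x y) ^ p :=
      Real.rpow_le_rpow dist_nonneg (dist_triangle u x y) hp0.le
  _ ≤ _ := rpow_add_le' hp0 hp1 dist_nonneg dist_nonneg

lemma mom_int_nbar {p : ℝ} (hp0 : 0 < p) (hp1 : p ≤ 1) (x₀ : X) [IsProbabilityMeasure lam]
    (h𝓑 : MeasurableSet 𝓑) (hm : lam 𝓑 ≤ 1/4)
    (hmom : ∫⁻ x, (ENNReal.ofReal (dist x₀ x)) ^ (2 * p) ∂lam ≠ ⊤) (z : X) :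
    Integrable (fun u => dist u z ^ p) (nbar 𝓑 lam) := by
  haveI := nbar_prob h𝓑 hm
  have base : Integrable (fun x => dist x₀ x ^ p) lam :=
    (mom_mem2 hp0 x₀ hmom).integrable (by norm_num)
  have b2 : Integrable (fun x => dist x₀ x ^ p) (nbar 𝓑 lam) := nbar_integrable hm base
  refine Integrable.mono' (b2.add (integrable_const (dist x₀ z ^ p)))
    (((continuous_id.dist continuous_const).rpow_const
      (fun x => Or.inr hp0.le)).aestronglyMeasurable) ?_
  refine Filter.Eventually.of_forall fun u => ?_
  rw [Real.norm_eq_abs, abs_of_nonneg (Real.rpow_nonneg dist_nonneg _)]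
  have := real_dist_rpow_le hp0 hp1 u x₀ z
  rwa [dist_comm u x₀] at this

lemma memL2_zero {p L : ℝ} (hp0 : 0 < p) (hp1 : p ≤ 1) (hL : 1 ≤ L) (x₀ z₀ : X)
    (hz₀ : z₀ ∉ 𝓑) [IsProbabilityMeasure lam]
    (hmom : ∫⁻ x, (ENNReal.ofReal (dist x₀ x)) ^ (2 * p) ∂lam ≠ ⊤)
    (hm0 : lam 𝓑 = 0) {ψ : X → ℝ} (hψmeas : Measurable ψ)
    (hHolder : ∀ x ∉ 𝓑, ∀ y ∉ 𝓑, |ψ x - ψ y| ≤ L * dist x y ^ p) :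
    MemLp ψ 2 lam := by
  have hmaj : MemLp (fun x => (|ψ z₀| + L * dist x₀ z₀ ^ p) + L * dist x₀ x ^ p) 2 lam :=
    by have := (memLp_const (|ψ z₀| + L * dist x₀ z₀ ^ p)).add ((mom_mem2 hp0 x₀ hmom).const_mul L); exact this
  refine MemLp.of_le hmaj hψmeas.aestronglyMeasurable ?_
  filter_upwards [measure_eq_zero_iff_ae_notMem.mp hm0] with x hx
  have h1 : |ψ x - ψ z₀| ≤ L * dist x z₀ ^ p := hHolder x hx z₀ hz₀
  have h2 : dist x z₀ ^ p ≤ dist x₀ x ^ p + dist x₀ z₀ ^ p := by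
    have := real_dist_rpow_le hp0 hp1 x x₀ z₀
    rwa [dist_comm x x₀] at this
  have hL0 : (0:ℝ) ≤ L := by linarith
  have habs : |ψ x| ≤ |ψ z₀| + L * dist x z₀ ^ p := by
    have := abs_sub_abs_le_abs_sub (ψ x) (ψ z₀)
    linarith
  rw [Real.norm_eq_abs, Real.norm_eq_abs]
  have hg0 : (0:ℝ) ≤ (|ψ z₀| + L * dist x₀ z₀ ^ p) + L * dist x₀ x ^ p := by positivity
  rw [abs_of_nonneg hg0]
  nlinarith [Real.rpow_nonneg (dist_nonneg (x := x₀) (y := x)) p,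
    Real.rpow_nonneg (dist_nonneg (x := x₀) (y := z₀)) p]

end moreHelpers

noncomputable section

/-- The set of couplings between `μ` and `ν`. -/
def couplings {X : Type*} [MeasurableSpace X] (μ ν : Measure X) : Set (Measure (X × X)) :=
  {π | π.map Prod.fst = μ ∧ π.map Prod.snd = ν}

/-- The order-`p` Wasserstein distance (`0 < p ≤ 1`):
`W_p(μ,ν) = inf_{π ∈ Π(μ,ν)} ∬ d(x,y)^p dπ(x,y)`. -/
def Wp {X : Type*} [MeasurableSpace X] [MetricSpace X] (p : ℝ) (μ ν : Measure X) : ℝ≥0∞ :=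
  ⨅ π ∈ couplings μ ν, ∫⁻ q : X × X, (ENNReal.ofReal (dist q.1 q.2)) ^ p ∂π

/-- for probability measures `μ, ν` on a Polish space with finite moments
`Θ_{2p}`, an open set `𝓑` with `μ(𝓑), ν(𝓑) ≤ 1/4`, and a measurable `ψ : X → ℝ` which is
`p`-Hölder with constant `L ≥ 1` off `𝓑`:
`|∫ψdμ - ∫ψdν| ≤ L [W_p(μ,ν) + 4√(μ𝓑)(‖ψ‖_{L²(μ)} + Θ_{2p}(μ)^{1/2})
                              + 4√(ν𝓑)(‖ψ‖_{L²(ν)} + Θ_{2p}(ν)^{1/2})]`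
(the right-hand side computed in `ℝ≥0∞`, with `‖ψ‖_{L²}` as `eLpNorm`). -/
theorem integral_diff_le_holder_off_small_set
    {X : Type*} [MetricSpace X] [CompleteSpace X] [TopologicalSpace.SeparableSpace X]
    [MeasurableSpace X] [BorelSpace X]
    {p L : ℝ} (hp0 : 0 < p) (hp1 : p ≤ 1 / 2) (hL : 1 ≤ L) (x₀ : X)
    (μ ν : Measure X) [IsProbabilityMeasure μ] [IsProbabilityMeasure ν]
    (hμmom : ∫⁻ x, (ENNReal.ofReal (dist x₀ x)) ^ (2 * p) ∂μ ≠ ⊤)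
    (hνmom : ∫⁻ x, (ENNReal.ofReal (dist x₀ x)) ^ (2 * p) ∂ν ≠ ⊤)
    (𝓑 : Set X) (h𝓑 : IsOpen 𝓑) (hμ𝓑 : μ 𝓑 ≤ 1 / 4) (hν𝓑 : ν 𝓑 ≤ 1 / 4)
    (ψ : X → ℝ) (hψmeas : Measurable ψ)
    (hHolder : ∀ x ∉ 𝓑, ∀ y ∉ 𝓑, |ψ x - ψ y| ≤ L * dist x y ^ p) :
    ENNReal.ofReal |(∫ x, ψ x ∂μ) - ∫ x, ψ x ∂ν|
      ≤ ENNReal.ofReal L *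
        (Wp p μ ν
          + 4 * (μ 𝓑) ^ (1 / 2 : ℝ)
            * (eLpNorm ψ 2 μ + (∫⁻ x, (ENNReal.ofReal (dist x₀ x)) ^ (2 * p) ∂μ) ^ (1 / 2 : ℝ))
          + 4 * (ν 𝓑) ^ (1 / 2 : ℝ)
            * (eLpNorm ψ 2 ν + (∫⁻ x, (ENNReal.ofReal (dist x₀ x)) ^ (2 * p) ∂ν) ^ (1 / 2 : ℝ))) := by
  classical
  have hp1' : p ≤ 1 := by linarith
  have hBmeas : MeasurableSet 𝓑 := h𝓑.measurableSet
  obtain ⟨z₀, hz₀⟩ : ∃ z, z ∉ 𝓑 := by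
    by_contra hcon
    push_neg at hcon
    have huniv : 𝓑 = Set.univ := Set.eq_univ_of_forall hcon
    rw [huniv, measure_univ] at hμ𝓑
    exact absurd hμ𝓑 (by norm_num)
  have hL0 : (0:ℝ) < L := by linarith
  have hLne : ENNReal.ofReal L ≠ 0 := by
    simp only [ne_eq, ENNReal.ofReal_eq_zero, not_le]; linarith
  have hL1 : (1:ℝ≥0∞) ≤ ENNReal.ofReal L := by
    rw [← ENNReal.ofReal_one]; exact ENNReal.ofReal_le_ofReal hL
  -- abbreviations for the two "penalty" terms
  set Eμ := eLpNorm ψ 2 μ with hEμdef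
  set Eν := eLpNorm ψ 2 ν with hEνdef
  set Θμh := (∫⁻ x, (ENNReal.ofReal (dist x₀ x)) ^ (2 * p) ∂μ) ^ (1 / 2 : ℝ) with hΘμdef
  set Θνh := (∫⁻ x, (ENNReal.ofReal (dist x₀ x)) ^ (2 * p) ∂ν) ^ (1 / 2 : ℝ) with hΘνdef
  set m₁ := μ 𝓑 with hm₁def
  set m₂ := ν 𝓑 with hm₂def
  -- reduction to the square-integrable case
  by_cases hmemμ : MemLp ψ 2 μ
  swap
  · have hE : Eμ = ⊤ := by
      by_contra hE
      exact hmemμ ⟨hψmeas.aestronglyMeasurable, lt_top_iff_ne_top.mpr hE⟩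
    have hm0 : m₁ ≠ 0 := fun h0 =>
      hmemμ (memL2_zero hp0 hp1' hL x₀ z₀ hz₀ hμmom h0 hψmeas hHolder)
    have htop : 4 * m₁ ^ (1/2:ℝ) * (Eμ + Θμh) = ⊤ := by
      rw [hE, top_add, ENNReal.mul_top]
      refine mul_ne_zero (by norm_num) ?_
      simp only [ne_eq, ENNReal.rpow_eq_zero_iff, not_or]
      constructor
      · rintro ⟨h, -⟩; exact hm0 h
      · rintro ⟨h, -⟩; exact (hm_ne_top hμ𝓑) h
    refine le_trans le_top (le_of_eq ?_)
    rw [htop, add_top, top_add, ENNReal.mul_top hLne]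
  by_cases hmemν : MemLp ψ 2 ν
  swap
  · have hE : Eν = ⊤ := by
      by_contra hE
      exact hmemν ⟨hψmeas.aestronglyMeasurable, lt_top_iff_ne_top.mpr hE⟩
    have hm0 : m₂ ≠ 0 := fun h0 =>
      hmemν (memL2_zero hp0 hp1' hL x₀ z₀ hz₀ hνmom h0 hψmeas hHolder)
    have htop : 4 * m₂ ^ (1/2:ℝ) * (Eν + Θνh) = ⊤ := by
      rw [hE, top_add, ENNReal.mul_top]
      refine mul_ne_zero (by norm_num) ?_
      simp only [ne_eq, ENNReal.rpow_eq_zero_iff, not_or]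
      constructor
      · rintro ⟨h, -⟩; exact hm0 h
      · rintro ⟨h, -⟩; exact (hm_ne_top hν𝓑) h
    refine le_trans le_top (le_of_eq ?_)
    rw [htop, add_top, ENNReal.mul_top hLne]
  -- main case
  haveI hPμb : IsProbabilityMeasure (nbar 𝓑 μ) := nbar_prob hBmeas hμ𝓑
  haveI hPνb : IsProbabilityMeasure (nbar 𝓑 ν) := nbar_prob hBmeas hν𝓑
  set cμ := ∫ x, ψ x ∂(nbar 𝓑 μ) with hcμdef
  set cν := ∫ x, ψ x ∂(nbar 𝓑 ν) with hcνdef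
  have hintψμ : Integrable ψ μ := hmemμ.integrable (by norm_num)
  have hintψν : Integrable ψ ν := hmemν.integrable (by norm_num)
  have hintψμb : Integrable ψ (nbar 𝓑 μ) := nbar_integrable hμ𝓑 hintψμ
  have hintψνb : Integrable ψ (nbar 𝓑 ν) := nbar_integrable hν𝓑 hintψν
  have T1 : ENNReal.ofReal |(∫ x, ψ x ∂μ) - cμ| ≤ 2 * m₁ ^ (1/2:ℝ) * Eμ :=
    term1 hBmeas hμ𝓑 hψmeas hmemμ
  have T3 : ENNReal.ofReal |(∫ x, ψ x ∂ν) - cν| ≤ 2 * m₂ ^ (1/2:ℝ) * Eν :=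
    term1 hBmeas hν𝓑 hψmeas hmemν
  -- the averaged real functions
  set g : X → ℝ := fun x => ∫ u, dist u x ^ p ∂(nbar 𝓑 μ) with hgdef
  set hh : X → ℝ := fun y => ∫ v, dist v y ^ p ∂(nbar 𝓑 ν) with hhdef
  have hmomintμ : ∀ z : X, Integrable (fun u => dist u z ^ p) (nbar 𝓑 μ) :=
    mom_int_nbar hp0 hp1' x₀ hBmeas hμ𝓑 hμmom
  have hmomintν : ∀ z : X, Integrable (fun u => dist u z ^ p) (nbar 𝓑 ν) :=
    mom_int_nbar hp0 hp1' x₀ hBmeas hν𝓑 hνmom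
  -- pointwise Hölder-type estimates
  have claimν : ∀ x ∉ 𝓑, ∀ y : X, |ψ x - cν| ≤ L * (dist x y ^ p + hh y) := by
    intro x hx y
    have heq : ψ x - cν = ∫ v, (ψ x - ψ v) ∂(nbar 𝓑 ν) := by
      rw [integral_sub (integrable_const _) hintψνb, integral_const, probReal_univ]
      simp [hcνdef]
    rw [heq, ← Real.norm_eq_abs]
    have hmajint : Integrable (fun v => L * (dist x y ^ p + dist v y ^ p)) (nbar 𝓑 ν) :=
      ((integrable_const _).add (hmomintν y)).const_mul L
    have hbound : ∀ᵐ v ∂(nbar 𝓑 ν), ‖ψ x - ψ v‖ ≤ L * (dist x y ^ p + dist v y ^ p) := by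
      filter_upwards [nbar_ae hBmeas] with v hv
      rw [Real.norm_eq_abs]
      have h1 : |ψ x - ψ v| ≤ L * dist x v ^ p := hHolder x hx v hv
      have h2 : dist x v ^ p ≤ dist x y ^ p + dist v y ^ p := by
        have := real_dist_rpow_le hp0 hp1' x y v
        rwa [dist_comm y v] at this
      nlinarith
    refine (norm_integral_le_of_norm_le hmajint hbound).trans (le_of_eq ?_)
    rw [integral_const_mul, integral_add (integrable_const _) (hmomintν y),
      integral_const, probReal_univ]
    simp [hhdef]
  have claimμ : ∀ y ∉ 𝓑, ∀ x : X, |cμ - ψ y| ≤ L * (g x + dist x y ^ p) := by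
    intro y hy x
    have heq : cμ - ψ y = ∫ u, (ψ u - ψ y) ∂(nbar 𝓑 μ) := by
      rw [integral_sub hintψμb (integrable_const _), integral_const, probReal_univ]
      simp [hcμdef]
    rw [heq, ← Real.norm_eq_abs]
    have hmajint : Integrable (fun u => L * (dist u x ^ p + dist x y ^ p)) (nbar 𝓑 μ) :=
      ((hmomintμ x).add (integrable_const _)).const_mul L
    have hbound : ∀ᵐ u ∂(nbar 𝓑 μ), ‖ψ u - ψ y‖ ≤ L * (dist u x ^ p + dist x y ^ p) := by
      filter_upwards [nbar_ae hBmeas] with u hu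
      rw [Real.norm_eq_abs]
      have h1 : |ψ u - ψ y| ≤ L * dist u y ^ p := hHolder u hu y hy
      have h2 : dist u y ^ p ≤ dist u x ^ p + dist x y ^ p := real_dist_rpow_le hp0 hp1' u x y
      nlinarith
    refine (norm_integral_le_of_norm_le hmajint hbound).trans (le_of_eq ?_)
    rw [integral_const_mul, integral_add (hmomintμ x) (integrable_const _),
      integral_const, probReal_univ]
    simp [hgdef]
  have claimboth : ∀ x y : X, |cμ - cν| ≤ L * (g x + dist x y ^ p + hh y) := by
    intro x y
    have heq : cμ - cν = ∫ u, (ψ u - cν) ∂(nbar 𝓑 μ) := by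
      rw [integral_sub hintψμb (integrable_const _), integral_const, probReal_univ]
      simp [hcμdef]
    rw [heq, ← Real.norm_eq_abs]
    have hmajint : Integrable (fun u => L * (dist u x ^ p + dist x y ^ p + hh y))
        (nbar 𝓑 μ) :=
      (((hmomintμ x).add (integrable_const _)).add (integrable_const _)).const_mul L
    have hbound : ∀ᵐ u ∂(nbar 𝓑 μ),
        ‖ψ u - cν‖ ≤ L * (dist u x ^ p + dist x y ^ p + hh y) := by
      filter_upwards [nbar_ae hBmeas] with u hu
      rw [Real.norm_eq_abs]
      have h1 : |ψ u - cν| ≤ L * (dist u y ^ p + hh y) := claimν u hu y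
      have h2 : dist u y ^ p ≤ dist u x ^ p + dist x y ^ p := real_dist_rpow_le hp0 hp1' u x y
      nlinarith
    refine (norm_integral_le_of_norm_le hmajint hbound).trans (le_of_eq ?_)
    rw [integral_const_mul]
    have e1 : (fun u => dist u x ^ p + dist x y ^ p + hh y)
        = (fun u => dist u x ^ p + (dist x y ^ p + hh y)) := by
      funext u; ring
    rw [e1, integral_add (hmomintμ x) (integrable_const _), integral_const, probReal_univ]
    simp only [ENNReal.toReal_one, one_smul, hgdef]
    ring
  -- the interpolating functions
  set φ₁ : X → ℝ := fun x => if x ∈ 𝓑 then cμ else ψ x with hφ₁def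
  set φ₂ : X → ℝ := fun y => if y ∈ 𝓑 then cν else ψ y with hφ₂def
  have hφ₁meas : Measurable φ₁ := Measurable.ite hBmeas measurable_const hψmeas
  have hφ₂meas : Measurable φ₂ := Measurable.ite hBmeas measurable_const hψmeas
  have hpiece₁ : φ₁ = 𝓑.piecewise (fun _ => cμ) ψ := rfl
  have hpiece₂ : φ₂ = 𝓑.piecewise (fun _ => cν) ψ := rfl
  have hφ₁int : Integrable φ₁ μ := by
    rw [hpiece₁]
    exact Integrable.piecewise hBmeas (integrableOn_const (measure_lt_top μ 𝓑).ne)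
      hintψμ.integrableOn
  have hφ₂int : Integrable φ₂ ν := by
    rw [hpiece₂]
    exact Integrable.piecewise hBmeas (integrableOn_const (measure_lt_top ν 𝓑).ne)
      hintψν.integrableOn
  have h1mμne : ((1:ℝ≥0∞) - m₁) ≠ ⊤ := ne_top_of_le_ne_top (by norm_num) tsub_le_self
  have h1mνne : ((1:ℝ≥0∞) - m₂) ≠ ⊤ := ne_top_of_le_ne_top (by norm_num) tsub_le_self
  have h1mμpos : 0 < ((1:ℝ≥0∞) - m₁).toReal := by
    have h := ENNReal.toReal_mono h1mμne (h34_le hμ𝓑)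
    have h34 : ((3:ℝ≥0∞)/4).toReal = 3/4 := by norm_num
    rw [h34] at h; linarith
  have h1mνpos : 0 < ((1:ℝ≥0∞) - m₂).toReal := by
    have h := ENNReal.toReal_mono h1mνne (h34_le hν𝓑)
    have h34 : ((3:ℝ≥0∞)/4).toReal = 3/4 := by norm_num
    rw [h34] at h; linarith
  have hintφμ : ∫ x, φ₁ x ∂μ = cμ := by
    rw [hpiece₁, integral_piecewise hBmeas
      (integrableOn_const (measure_lt_top μ 𝓑).ne) hintψμ.integrableOn,
      setIntegral_const]
    have hC : ∫ x in 𝓑ᶜ, ψ x ∂μ = ((1:ℝ≥0∞) - m₁).toReal * cμ := by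
      rw [hcμdef, nbar, integral_smul_measure, smul_eq_mul, ← mul_assoc,
        ENNReal.toReal_inv, mul_inv_cancel₀ h1mμpos.ne', one_mul]
    rw [hC]
    have hsum : m₁.toReal + ((1:ℝ≥0∞) - m₁).toReal = 1 := by
      rw [← ENNReal.toReal_add (hm_ne_top hμ𝓑) h1mμne,
        add_tsub_cancel_of_le (prob_le_one : m₁ ≤ 1), ENNReal.toReal_one]
    rw [smul_eq_mul, measureReal_def, ← hm₁def]
    linear_combination cμ * hsum
  have hintφν : ∫ x, φ₂ x ∂ν = cν := by
    rw [hpiece₂, integral_piecewise hBmeas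
      (integrableOn_const (measure_lt_top ν 𝓑).ne) hintψν.integrableOn,
      setIntegral_const]
    have hC : ∫ x in 𝓑ᶜ, ψ x ∂ν = ((1:ℝ≥0∞) - m₂).toReal * cν := by
      rw [hcνdef, nbar, integral_smul_measure, smul_eq_mul, ← mul_assoc,
        ENNReal.toReal_inv, mul_inv_cancel₀ h1mνpos.ne', one_mul]
    rw [hC]
    have hsum : m₂.toReal + ((1:ℝ≥0∞) - m₂).toReal = 1 := by
      rw [← ENNReal.toReal_add (hm_ne_top hν𝓑) h1mνne,
        add_tsub_cancel_of_le (prob_le_one : m₂ ≤ 1), ENNReal.toReal_one]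
    rw [smul_eq_mul, measureReal_def, ← hm₂def]
    linear_combination cν * hsum
  -- ENNReal versions of g and h
  set G : X → ℝ≥0∞ := fun x => ∫⁻ u, (ENNReal.ofReal (dist u x)) ^ p ∂(nbar 𝓑 μ) with hGdef
  set H : X → ℝ≥0∞ := fun y => ∫⁻ v, (ENNReal.ofReal (dist v y)) ^ p ∂(nbar 𝓑 ν) with hHdef
  have hGmeas : Measurable G := by
    rw [hGdef]
    exact Measurable.lintegral_prod_right'
      (f := fun q : X × X => (ENNReal.ofReal (dist q.2 q.1)) ^ p)
      (((continuous_snd.dist continuous_fst).measurable).ennreal_ofReal.pow_const p)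
  have hHmeas : Measurable H := by
    rw [hHdef]
    exact Measurable.lintegral_prod_right'
      (f := fun q : X × X => (ENNReal.ofReal (dist q.2 q.1)) ^ p)
      (((continuous_snd.dist continuous_fst).measurable).ennreal_ofReal.pow_const p)
  have hofg : ∀ x, ENNReal.ofReal (g x) = G x := by
    intro x
    rw [hgdef, hGdef]
    rw [ofReal_integral_eq_lintegral_ofReal (hmomintμ x)
      (Filter.Eventually.of_forall fun u => Real.rpow_nonneg dist_nonneg p)]
    exact lintegral_congr fun u => (ENNReal.ofReal_rpow_of_nonneg dist_nonneg hp0.le).symm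
  have hofh : ∀ y, ENNReal.ofReal (hh y) = H y := by
    intro y
    rw [hhdef, hHdef]
    rw [ofReal_integral_eq_lintegral_ofReal (hmomintν y)
      (Filter.Eventually.of_forall fun v => Real.rpow_nonneg dist_nonneg p)]
    exact lintegral_congr fun v => (ENNReal.ofReal_rpow_of_nonneg dist_nonneg hp0.le).symm
  -- the pointwise key estimate
  have key : ∀ q : X × X, ENNReal.ofReal |φ₁ q.1 - φ₂ q.2|
      ≤ ENNReal.ofReal L * ((ENNReal.ofReal (dist q.1 q.2)) ^ p
          + 𝓑.indicator G q.1 + 𝓑.indicator H q.2) := by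
    rintro ⟨x, y⟩
    have hdist : ENNReal.ofReal (dist x y ^ p) = (ENNReal.ofReal (dist x y)) ^ p :=
      (ENNReal.ofReal_rpow_of_nonneg dist_nonneg hp0.le).symm
    have hg0 : 0 ≤ g x := integral_nonneg fun u => Real.rpow_nonneg dist_nonneg p
    have hh0 : 0 ≤ hh y := integral_nonneg fun v => Real.rpow_nonneg dist_nonneg p
    have hd0 : 0 ≤ dist x y ^ p := Real.rpow_nonneg dist_nonneg p
    by_cases hx : x ∈ 𝓑 <;> by_cases hy : y ∈ 𝓑
    · simp only [hφ₁def, hφ₂def, if_pos hx, if_pos hy, Set.indicator_of_mem hx,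
        Set.indicator_of_mem hy]
      refine le_trans (ENNReal.ofReal_le_ofReal (claimboth x y)) ?_
      rw [ENNReal.ofReal_mul hL0.le]
      refine mul_le_mul' le_rfl ?_
      rw [ENNReal.ofReal_add (by linarith) hh0, ENNReal.ofReal_add hg0 hd0,
        hofg, hofh, hdist]
      exact le_of_eq (by ring)
    · simp only [hφ₁def, hφ₂def, if_pos hx, if_neg hy, Set.indicator_of_mem hx,
        Set.indicator_of_notMem hy]
      refine le_trans (ENNReal.ofReal_le_ofReal (claimμ y hy x)) ?_
      rw [ENNReal.ofReal_mul hL0.le]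
      refine mul_le_mul' le_rfl ?_
      rw [ENNReal.ofReal_add hg0 hd0, hofg, hdist]
      exact le_of_eq (by ring)
    · simp only [hφ₁def, hφ₂def, if_neg hx, if_pos hy, Set.indicator_of_notMem hx,
        Set.indicator_of_mem hy]
      refine le_trans (ENNReal.ofReal_le_ofReal (claimν x hx y)) ?_
      rw [ENNReal.ofReal_mul hL0.le]
      refine mul_le_mul' le_rfl ?_
      rw [ENNReal.ofReal_add hd0 hh0, hofh, hdist]
      exact le_of_eq (by ring)
    · simp only [hφ₁def, hφ₂def, if_neg hx, if_neg hy, Set.indicator_of_notMem hx,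
        Set.indicator_of_notMem hy]
      refine le_trans (ENNReal.ofReal_le_ofReal (hHolder x hx y hy)) ?_
      rw [ENNReal.ofReal_mul hL0.le, hdist]
      refine mul_le_mul' le_rfl ?_
      exact le_of_eq (by ring)
  -- measurability of the pieces on the product
  have hdmeas : Measurable fun q : X × X => (ENNReal.ofReal (dist q.1 q.2)) ^ p :=
    ((continuous_fst.dist continuous_snd).measurable).ennreal_ofReal.pow_const p
  have hindGfst : Measurable fun q : X × X => 𝓑.indicator G q.1 :=
    (hGmeas.indicator hBmeas).comp measurable_fst
  have hindHsnd : Measurable fun q : X × X => 𝓑.indicator H q.2 :=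
    (hHmeas.indicator hBmeas).comp measurable_snd
  -- the middle bound, per coupling
  have hmid : ∀ π : Measure (X × X), π ∈ couplings μ ν →
      ENNReal.ofReal |cμ - cν| ≤ ENNReal.ofReal L *
        ((∫⁻ q : X × X, (ENNReal.ofReal (dist q.1 q.2)) ^ p ∂π)
          + 2 * m₁ ^ (1/2:ℝ) * Θμh + 2 * m₂ ^ (1/2:ℝ) * Θνh) := by
    rintro π ⟨hπ1, hπ2⟩
    have hφ₁fst : Integrable (fun q : X × X => φ₁ q.1) π := by
      have h := (integrable_map_measure hφ₁meas.aestronglyMeasurable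
        measurable_fst.aemeasurable).mp (by rw [hπ1]; exact hφ₁int)
      exact h
    have hφ₂snd : Integrable (fun q : X × X => φ₂ q.2) π := by
      have h := (integrable_map_measure hφ₂meas.aestronglyMeasurable
        measurable_snd.aemeasurable).mp (by rw [hπ2]; exact hφ₂int)
      exact h
    have heq1 : ∫ q : X × X, φ₁ q.1 ∂π = cμ := by
      have h := integral_map measurable_fst.aemeasurable
        (hφ₁meas.aestronglyMeasurable (μ := π.map Prod.fst))
      rw [hπ1] at h
      rw [← h]
      exact hintφμ
    have heq2 : ∫ q : X × X, φ₂ q.2 ∂π = cν := by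
      have h := integral_map measurable_snd.aemeasurable
        (hφ₂meas.aestronglyMeasurable (μ := π.map Prod.snd))
      rw [hπ2] at h
      rw [← h]
      exact hintφν
    have hsubeq : cμ - cν = ∫ q : X × X, (φ₁ q.1 - φ₂ q.2) ∂π := by
      rw [integral_sub hφ₁fst hφ₂snd, heq1, heq2]
    have hmapG : ∫⁻ q : X × X, 𝓑.indicator G q.1 ∂π = ∫⁻ x in 𝓑, G x ∂μ := by
      have h := lintegral_map (hGmeas.indicator hBmeas) measurable_fst (μ := π)
      rw [hπ1] at h
      rw [← h, lintegral_indicator hBmeas]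
    have hmapH : ∫⁻ q : X × X, 𝓑.indicator H q.2 ∂π = ∫⁻ y in 𝓑, H y ∂ν := by
      have h := lintegral_map (hHmeas.indicator hBmeas) measurable_snd (μ := π)
      rw [hπ2] at h
      rw [← h, lintegral_indicator hBmeas]
    calc ENNReal.ofReal |cμ - cν|
        = ENNReal.ofReal |∫ q : X × X, (φ₁ q.1 - φ₂ q.2) ∂π| := by rw [← hsubeq]
      _ ≤ ENNReal.ofReal (∫ q : X × X, |φ₁ q.1 - φ₂ q.2| ∂π) := by
          apply ENNReal.ofReal_le_ofReal
          rw [← Real.norm_eq_abs]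
          exact (norm_integral_le_integral_norm _).trans
            (le_of_eq (by simp [Real.norm_eq_abs]))
      _ = ∫⁻ q : X × X, ENNReal.ofReal |φ₁ q.1 - φ₂ q.2| ∂π :=
          ofReal_integral_eq_lintegral_ofReal (hφ₁fst.sub hφ₂snd).abs
            (Filter.Eventually.of_forall fun q => abs_nonneg _)
      _ ≤ ∫⁻ q : X × X, ENNReal.ofReal L * ((ENNReal.ofReal (dist q.1 q.2)) ^ p
            + 𝓑.indicator G q.1 + 𝓑.indicator H q.2) ∂π := lintegral_mono key
      _ = ENNReal.ofReal L * ∫⁻ q : X × X, ((ENNReal.ofReal (dist q.1 q.2)) ^ p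
            + 𝓑.indicator G q.1 + 𝓑.indicator H q.2) ∂π :=
          lintegral_const_mul _ ((hdmeas.add hindGfst).add hindHsnd)
      _ = ENNReal.ofReal L * ((∫⁻ q : X × X, (ENNReal.ofReal (dist q.1 q.2)) ^ p ∂π)
            + (∫⁻ x in 𝓑, G x ∂μ) + (∫⁻ y in 𝓑, H y ∂ν)) := by
          rw [lintegral_add_right _ hindHsnd, lintegral_add_right _ hindGfst, hmapG, hmapH]
      _ ≤ ENNReal.ofReal L * ((∫⁻ q : X × X, (ENNReal.ofReal (dist q.1 q.2)) ^ p ∂π)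
            + 2 * m₁ ^ (1/2:ℝ) * Θμh + 2 * m₂ ^ (1/2:ℝ) * Θνh) := by
          refine mul_le_mul' le_rfl (add_le_add (add_le_add le_rfl ?_) ?_)
          · exact Gbound hp0 hp1' x₀ hBmeas hμ𝓑
          · exact Gbound hp0 hp1' x₀ hBmeas hν𝓑
  -- full per-coupling bound
  have main : ∀ π : Measure (X × X), π ∈ couplings μ ν →
      ENNReal.ofReal |(∫ x, ψ x ∂μ) - ∫ x, ψ x ∂ν|
        ≤ ENNReal.ofReal L * ((∫⁻ q : X × X, (ENNReal.ofReal (dist q.1 q.2)) ^ p ∂π)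
            + 4 * m₁ ^ (1/2:ℝ) * (Eμ + Θμh) + 4 * m₂ ^ (1/2:ℝ) * (Eν + Θνh)) := by
    intro π hπ
    have tri : |(∫ x, ψ x ∂μ) - ∫ x, ψ x ∂ν|
        ≤ |(∫ x, ψ x ∂μ) - cμ| + |cμ - cν| + |cν - ∫ x, ψ x ∂ν| := by
      have h1 := abs_sub_le (∫ x, ψ x ∂μ) cμ (∫ x, ψ x ∂ν)
      have h2 := abs_sub_le cμ cν (∫ x, ψ x ∂ν)
      linarith
    have T3' : ENNReal.ofReal |cν - ∫ x, ψ x ∂ν| ≤ 2 * m₂ ^ (1/2:ℝ) * Eν := by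
      rw [abs_sub_comm]; exact T3
    have inner : 2 * m₁ ^ (1/2:ℝ) * Eμ + 2 * m₁ ^ (1/2:ℝ) * Θμh
        + 2 * m₂ ^ (1/2:ℝ) * Θνh + 2 * m₂ ^ (1/2:ℝ) * Eν
        ≤ 4 * m₁ ^ (1/2:ℝ) * (Eμ + Θμh) + 4 * m₂ ^ (1/2:ℝ) * (Eν + Θνh) := by
      calc 2 * m₁ ^ (1/2:ℝ) * Eμ + 2 * m₁ ^ (1/2:ℝ) * Θμh
          + 2 * m₂ ^ (1/2:ℝ) * Θνh + 2 * m₂ ^ (1/2:ℝ) * Eν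
          = 2 * m₁ ^ (1/2:ℝ) * (Eμ + Θμh) + 2 * m₂ ^ (1/2:ℝ) * (Eν + Θνh) := by ring
        _ ≤ 4 * m₁ ^ (1/2:ℝ) * (Eμ + Θμh) + 4 * m₂ ^ (1/2:ℝ) * (Eν + Θνh) := by
            refine add_le_add (mul_le_mul' (mul_le_mul' ?_ le_rfl) le_rfl)
              (mul_le_mul' (mul_le_mul' ?_ le_rfl) le_rfl)
            · norm_num
            · norm_num
    calc ENNReal.ofReal |(∫ x, ψ x ∂μ) - ∫ x, ψ x ∂ν|
        ≤ ENNReal.ofReal (|(∫ x, ψ x ∂μ) - cμ| + |cμ - cν| + |cν - ∫ x, ψ x ∂ν|) :=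
          ENNReal.ofReal_le_ofReal tri
      _ ≤ ENNReal.ofReal (|(∫ x, ψ x ∂μ) - cμ| + |cμ - cν|)
          + ENNReal.ofReal |cν - ∫ x, ψ x ∂ν| := ENNReal.ofReal_add_le
      _ ≤ ENNReal.ofReal |(∫ x, ψ x ∂μ) - cμ| + ENNReal.ofReal |cμ - cν|
          + ENNReal.ofReal |cν - ∫ x, ψ x ∂ν| :=
          add_le_add_left ENNReal.ofReal_add_le _
      _ ≤ 2 * m₁ ^ (1/2:ℝ) * Eμ
          + ENNReal.ofReal L * ((∫⁻ q : X × X, (ENNReal.ofReal (dist q.1 q.2)) ^ p ∂π)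
              + 2 * m₁ ^ (1/2:ℝ) * Θμh + 2 * m₂ ^ (1/2:ℝ) * Θνh)
          + 2 * m₂ ^ (1/2:ℝ) * Eν :=
          add_le_add (add_le_add T1 (hmid π hπ)) T3'
      _ ≤ ENNReal.ofReal L * (2 * m₁ ^ (1/2:ℝ) * Eμ)
          + ENNReal.ofReal L * ((∫⁻ q : X × X, (ENNReal.ofReal (dist q.1 q.2)) ^ p ∂π)
              + 2 * m₁ ^ (1/2:ℝ) * Θμh + 2 * m₂ ^ (1/2:ℝ) * Θνh)
          + ENNReal.ofReal L * (2 * m₂ ^ (1/2:ℝ) * Eν) := by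
          refine add_le_add (add_le_add ?_ le_rfl) ?_
          · calc 2 * m₁ ^ (1/2:ℝ) * Eμ = 1 * (2 * m₁ ^ (1/2:ℝ) * Eμ) := (one_mul _).symm
              _ ≤ ENNReal.ofReal L * (2 * m₁ ^ (1/2:ℝ) * Eμ) := mul_le_mul' hL1 le_rfl
          · calc 2 * m₂ ^ (1/2:ℝ) * Eν = 1 * (2 * m₂ ^ (1/2:ℝ) * Eν) := (one_mul _).symm
              _ ≤ ENNReal.ofReal L * (2 * m₂ ^ (1/2:ℝ) * Eν) := mul_le_mul' hL1 le_rfl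
      _ = ENNReal.ofReal L * ((∫⁻ q : X × X, (ENNReal.ofReal (dist q.1 q.2)) ^ p ∂π)
            + (2 * m₁ ^ (1/2:ℝ) * Eμ + 2 * m₁ ^ (1/2:ℝ) * Θμh
              + 2 * m₂ ^ (1/2:ℝ) * Θνh + 2 * m₂ ^ (1/2:ℝ) * Eν)) := by ring
      _ ≤ ENNReal.ofReal L * ((∫⁻ q : X × X, (ENNReal.ofReal (dist q.1 q.2)) ^ p ∂π)
            + (4 * m₁ ^ (1/2:ℝ) * (Eμ + Θμh) + 4 * m₂ ^ (1/2:ℝ) * (Eν + Θνh))) :=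
          mul_le_mul' le_rfl (add_le_add le_rfl inner)
      _ = ENNReal.ofReal L * ((∫⁻ q : X × X, (ENNReal.ofReal (dist q.1 q.2)) ^ p ∂π)
            + 4 * m₁ ^ (1/2:ℝ) * (Eμ + Θμh) + 4 * m₂ ^ (1/2:ℝ) * (Eν + Θνh)) := by ring
  -- conclude by approximating the infimum
  refine ENNReal.le_of_forall_pos_le_add fun ε hε hlt => ?_
  have hWne : Wp p μ ν ≠ ⊤ := by
    intro htop
    rw [htop, top_add, top_add, ENNReal.mul_top hLne] at hlt
    exact absurd hlt (lt_irrefl _)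
  set δ := (ε : ℝ≥0∞) / ENNReal.ofReal L with hδdef
  have hδ0 : δ ≠ 0 := by
    rw [hδdef]
    simp only [ne_eq, ENNReal.div_eq_zero_iff, not_or]
    constructor
    · exact_mod_cast hε.ne'
    · exact ENNReal.ofReal_ne_top
  obtain ⟨π, hπS, hπval⟩ : ∃ π ∈ couplings μ ν,
      (∫⁻ q : X × X, (ENNReal.ofReal (dist q.1 q.2)) ^ p ∂π) ≤ Wp p μ ν + δ := by
    by_contra hcon
    push_neg at hcon
    have hge : Wp p μ ν + δ ≤ Wp p μ ν := by
      conv_rhs => rw [Wp]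
      exact le_iInf₂ fun π hπ => (hcon π hπ).le
    have hlt2 : Wp p μ ν < Wp p μ ν + δ := ENNReal.lt_add_right hWne hδ0
    exact absurd (lt_of_lt_of_le hlt2 hge) (lt_irrefl _)
  calc ENNReal.ofReal |(∫ x, ψ x ∂μ) - ∫ x, ψ x ∂ν|
      ≤ ENNReal.ofReal L * ((∫⁻ q : X × X, (ENNReal.ofReal (dist q.1 q.2)) ^ p ∂π)
          + 4 * m₁ ^ (1/2:ℝ) * (Eμ + Θμh) + 4 * m₂ ^ (1/2:ℝ) * (Eν + Θνh)) := main π hπS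
    _ ≤ ENNReal.ofReal L * ((Wp p μ ν + δ)
          + 4 * m₁ ^ (1/2:ℝ) * (Eμ + Θμh) + 4 * m₂ ^ (1/2:ℝ) * (Eν + Θνh)) :=
        mul_le_mul' le_rfl (add_le_add (add_le_add hπval le_rfl) le_rfl)
    _ = ENNReal.ofReal L * (Wp p μ ν
          + 4 * m₁ ^ (1/2:ℝ) * (Eμ + Θμh) + 4 * m₂ ^ (1/2:ℝ) * (Eν + Θνh))
        + ENNReal.ofReal L * δ := by ring
    _ = ENNReal.ofReal L * (Wp p μ ν
          + 4 * m₁ ^ (1/2:ℝ) * (Eμ + Θμh) + 4 * m₂ ^ (1/2:ℝ) * (Eν + Θνh)) + ↑ε := by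
        rw [hδdef, ENNReal.mul_div_cancel hLne ENNReal.ofReal_ne_top]

end
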